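/- Let n ≥ 1 be an integer and M, C > 0 real constants. Let V, e, W : (0,1] → ℝ be functions with V(δ) ≥ 0, 0 ≤ e(δ) ≤ M and W(δ) ≥ 0 for all δ ∈ (0,1], and suppose that for every δ ∈ (0,1] and every t ∈ [0, 1/(10n)] with V(δ) + n·t·e(δ) − 5·n²·t²·M ≥ 0 one has C^{n−1}·W(δ) ≥ (V(δ) + n·t·e(δ) − 5·n²·t²·M)ⁿ. If W(δ) → 0 as δ → 0⁺, then e(δ) → 0 and V(δ) → 0 as δ → 0⁺. -/

import Mathlib

open Filter Set

/-- Analytic skeleton of the proof of the main theorem (orthogonality of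
divisorial Zariski decompositions for classes of volume zero): if
`W(δ) → 0` as `δ → 0⁺` and for every admissible `t` the Morse-type inequality
`C^{n-1}·W(δ) ≥ (V(δ) + n·t·e(δ) − 5·n²·t²·M)ⁿ` holds, then
`e(δ) → 0` and `V(δ) → 0` as `δ → 0⁺`. -/
theorem stmt_2 (n : ℕ) (hn : 1 ≤ n) (M C : ℝ) (hM : 0 < M) (hC : 0 < C)
    (V e W : ℝ → ℝ)
    (hV : ∀ δ ∈ Ioc (0 : ℝ) 1, 0 ≤ V δ)
    (he0 : ∀ δ ∈ Ioc (0 : ℝ) 1, 0 ≤ e δ)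
    (heM : ∀ δ ∈ Ioc (0 : ℝ) 1, e δ ≤ M)
    (hW : ∀ δ ∈ Ioc (0 : ℝ) 1, 0 ≤ W δ)
    (hkey : ∀ δ ∈ Ioc (0 : ℝ) 1, ∀ t ∈ Icc (0 : ℝ) (1 / (10 * n)),
      0 ≤ V δ + n * t * e δ - 5 * n ^ 2 * t ^ 2 * M →
      C ^ (n - 1) * W δ ≥ (V δ + n * t * e δ - 5 * n ^ 2 * t ^ 2 * M) ^ n)
    (hWlim : Tendsto W (nhdsWithin 0 (Ioi 0)) (nhds 0)) :
    Tendsto e (nhdsWithin 0 (Ioi 0)) (nhds 0) ∧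
      Tendsto V (nhdsWithin 0 (Ioi 0)) (nhds 0) := by
  have hn0 : (0:ℝ) < n := by exact_mod_cast Nat.pos_of_ne_zero (by omega)
  set g : ℝ → ℝ := fun δ => V δ + (e δ)^2 / (20 * M) with hgdef
  have hmem : ∀ᶠ δ in nhdsWithin 0 (Ioi 0), δ ∈ Ioc (0:ℝ) 1 :=
    Ioc_mem_nhdsGT_of_mem (by constructor <;> norm_num)
  have hgnn : ∀ δ ∈ Ioc (0:ℝ) 1, 0 ≤ g δ := fun δ hδ => by
    have h1 := hV δ hδ; have h2 := he0 δ hδ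
    simp only [hgdef]; positivity
  have hkey' : ∀ δ ∈ Ioc (0:ℝ) 1, g δ ^ n ≤ C ^ (n-1) * W δ := by
    intro δ hδ
    have he0' := he0 δ hδ
    have ht : e δ / (10 * n * M) ∈ Icc (0:ℝ) (1/(10*n)) := by
      constructor
      · positivity
      · rw [div_le_div_iff₀ (by positivity) (by positivity)]
        have := heM δ hδ
        nlinarith
    have hexpr : V δ + n * (e δ / (10 * n * M)) * e δ
        - 5 * n ^ 2 * (e δ / (10 * n * M)) ^ 2 * M = g δ := by
      simp only [hgdef]
      field_simp
      ring
    have := hkey δ hδ _ ht (by rw [hexpr]; exact hgnn δ hδ)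
    rw [hexpr] at this
    linarith
  have hWC : Tendsto (fun δ => (C ^ (n-1) * W δ) ^ ((n:ℝ)⁻¹))
      (nhdsWithin 0 (Ioi 0)) (nhds 0) := by
    have h1 : Tendsto (fun δ => C ^ (n-1) * W δ) (nhdsWithin 0 (Ioi 0)) (nhds 0) := by
      simpa using hWlim.const_mul (C ^ (n-1))
    have h2 : ContinuousAt (fun x : ℝ => x ^ ((n:ℝ)⁻¹)) 0 :=
      Real.continuousAt_rpow_const 0 _ (Or.inr (by positivity))
    have h3 := h2.tendsto.comp h1
    simpa [Function.comp_def, Real.zero_rpow (by positivity : ((n:ℝ)⁻¹) ≠ 0)] using h3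
  have hg : Tendsto g (nhdsWithin 0 (Ioi 0)) (nhds 0) := by
    apply tendsto_of_tendsto_of_tendsto_of_le_of_le' tendsto_const_nhds hWC
    · filter_upwards [hmem] with δ hδ using hgnn δ hδ
    · filter_upwards [hmem] with δ hδ
      have h1 : g δ = (g δ ^ n) ^ ((n:ℝ)⁻¹) :=
        (Real.pow_rpow_inv_natCast (hgnn δ hδ) (by omega)).symm
      rw [h1]
      exact Real.rpow_le_rpow (pow_nonneg (hgnn δ hδ) n) (hkey' δ hδ) (by positivity)
  constructor
  · apply tendsto_of_tendsto_of_tendsto_of_le_of_le' (g := fun _ => (0:ℝ))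
      (h := fun δ => Real.sqrt (20 * M * g δ)) tendsto_const_nhds
    · have h5 : Tendsto (fun δ => 20 * M * g δ) (nhdsWithin 0 (Ioi 0)) (nhds 0) := by
        simpa using hg.const_mul (20*M)
      have h4 := (Real.continuous_sqrt.tendsto 0).comp h5
      simpa [Function.comp_def] using h4
    · filter_upwards [hmem] with δ hδ using he0 δ hδ
    · filter_upwards [hmem] with δ hδ
      have h1 : e δ ^ 2 ≤ 20 * M * g δ := by
        have h2 := hV δ hδ
        simp only [hgdef]
        have : 20 * M * ((e δ)^2 / (20*M)) = (e δ)^2 := by field_simp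
        nlinarith
      calc e δ = Real.sqrt (e δ ^ 2) := (Real.sqrt_sq (he0 δ hδ)).symm
        _ ≤ _ := Real.sqrt_le_sqrt h1
  · apply tendsto_of_tendsto_of_tendsto_of_le_of_le' tendsto_const_nhds hg
    · filter_upwards [hmem] with δ hδ using hV δ hδ
    · filter_upwards [hmem] with δ hδ
      have h2 := he0 δ hδ
      have h3 : 0 ≤ e δ ^ 2 / (20 * M) := by positivity
      simp only [hgdef]
      linarith
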